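/- Let n ≥ 2 and let M : Matrix (Fin n) (Fin n) ℝ be defined by M i j = (if π i = j then a i j else 0) + (if τ i = j then a i j else 0) (the matrix of structural constants of E^n_{π,τ}). Let M_{n−1} denote the top-left (n−1)×(n−1) submatrix of M, and for i₀ : Fin (n−1) let Mᵀ_{i₀,n} denote the matrix obtained from the transpose of M_{n−1} by replacing its i₀-th column with the column vector (M (n−1) j)_{j : Fin (n−1)} formed by the first n−1 entries of the last row of M. If the rank of M equals n − 1 and det(Mᵀ_{i₀,n}) * det(M_{n−1}) > 0 for some i₀ : Fin (n−1), then the only absolute nilpotent element of E^n_{π,τ} is x = 0. -/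

import Mathlib

/-- The product of the evolution algebra `E_{π,τ}(a)` on a finite type `ι`. -/
noncomputable def evolMul {ι : Type*} [Fintype ι] [DecidableEq ι]
    (π τ : Equiv.Perm ι) (a : ι → ι → ℝ) (x y : ι → ℝ) : ι → ℝ :=
  fun j => ∑ i, x i * y i *
    ((if π i = j then a i (π i) else 0) + (if τ i = j then a i (τ i) else 0))

open Matrix in
/-- if the matrix `M` of structural constants of `E^n_{π,τ}` (with `n ≥ 2`)
has rank `n − 1` and `det (Mᵀ_{i₀,n}) * det (M_{n−1}) > 0` for some `i₀`, where
`M_{n−1}` is the top-left `(n−1)×(n−1)` submatrix of `M` and `Mᵀ_{i₀,n}` is obtained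
from the transpose of `M_{n−1}` by replacing its `i₀`-th column with the first `n−1`
entries of the last row of `M`, then the only absolute nilpotent element of
`E^n_{π,τ}` is `x = 0`. -/
theorem stmt_4 (n : ℕ) (hn : 2 ≤ n) (π τ : Equiv.Perm (Fin n))
    (a : Fin n → Fin n → ℝ) (M : Matrix (Fin n) (Fin n) ℝ)
    (hM : ∀ i j, M i j = (if π i = j then a i j else 0) + (if τ i = j then a i j else 0))
    (Mn1 : Matrix (Fin (n - 1)) (Fin (n - 1)) ℝ)
    (hMn1 : Mn1 = M.submatrix (Fin.castLE (Nat.sub_le n 1)) (Fin.castLE (Nat.sub_le n 1)))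
    (hrank : M.rank = n - 1)
    (i₀ : Fin (n - 1))
    (hdet : (Mn1.transpose.updateCol i₀
        (fun j : Fin (n - 1) => M ⟨n - 1, by omega⟩ (Fin.castLE (Nat.sub_le n 1) j))).det
          * Mn1.det > 0) :
    ∀ x : Fin n → ℝ, evolMul π τ a x x = 0 → x = 0 := by
  obtain ⟨m, rfl⟩ : ∃ m, n = m + 1 := ⟨n - 1, by omega⟩
  intro x hx
  have hveq : ∀ j : Fin (m+1), ∑ i, x i * x i * M i j = 0 := by
    intro j
    have h := congrFun hx j
    simp only [evolMul, Pi.zero_apply] at h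
    rw [← h]
    apply Finset.sum_congr rfl
    intro i _
    rw [hM]
    have e1 : (if π i = j then a i (π i) else 0) = (if π i = j then a i j else 0) := by
      by_cases h : π i = j <;> simp [h]
    have e2 : (if τ i = j then a i (τ i) else 0) = (if τ i = j then a i j else 0) := by
      by_cases h : τ i = j <;> simp [h]
    rw [e1, e2]
  set A : Matrix (Fin m) (Fin m) ℝ := Mn1.transpose with hA
  set b : Fin m → ℝ :=
    (fun j : Fin m => M ⟨m, by omega⟩ (Fin.castLE (Nat.sub_le (m+1) 1) j)) with hb
  set u : Fin m → ℝ := fun i => x (Fin.castSucc i) * x (Fin.castSucc i) with hu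
  set lam : ℝ := x (Fin.last m) * x (Fin.last m) with hlam
  have hcast : ∀ j : Fin m, Fin.castLE (Nat.sub_le (m+1) 1) j = Fin.castSucc j := by
    intro j; ext; rfl
  have hkey : A *ᵥ u = (-lam) • b := by
    funext j
    have h := hveq (Fin.castSucc j)
    rw [Fin.sum_univ_castSucc] at h
    simp only [Matrix.mulVec, dotProduct, hA, Matrix.transpose_apply, hMn1,
      Matrix.submatrix_apply, Pi.smul_apply, hb, smul_eq_mul, hcast]
    have hlast : (⟨m, by omega⟩ : Fin (m+1)) = Fin.last m := rfl
    rw [hlast]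
    have hs : ∑ i : Fin m, M i.castSucc j.castSucc * u i
        = ∑ i : Fin m, x i.castSucc * x i.castSucc * M i.castSucc j.castSucc :=
      Finset.sum_congr rfl (fun i _ => mul_comm _ _)
    rw [hs]
    have hl : lam = x (Fin.last m) * x (Fin.last m) := rfl
    rw [hl]
    linarith [h]
  have h1 : A.adjugate *ᵥ (A *ᵥ u) = A.det • u := by
    rw [Matrix.mulVec_mulVec, Matrix.adjugate_mul, Matrix.smul_mulVec, Matrix.one_mulVec]
  have h2 : A.det • u = (-lam) • (Matrix.cramer A b) := by
    rw [← h1, hkey, Matrix.mulVec_smul, Matrix.cramer_eq_adjugate_mulVec]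
  have hDi : Matrix.cramer A b i₀ = (A.updateCol i₀ b).det := Matrix.cramer_apply A b i₀
  have hdA : A.det = Mn1.det := Matrix.det_transpose Mn1
  set D : ℝ := (A.updateCol i₀ b).det with hD
  have hprod : D * Mn1.det > 0 := hdet
  have hi0 : Mn1.det * u i₀ = -lam * D := by
    have := congrFun h2 i₀
    simpa [hDi, hdA, hD] using this
  have hu0 : 0 ≤ u i₀ := mul_self_nonneg _
  have hl0 : 0 ≤ lam := mul_self_nonneg _
  have h3 : Mn1.det * Mn1.det * u i₀ = -(lam * (D * Mn1.det)) := by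
    linear_combination Mn1.det * hi0
  have h4 : 0 ≤ Mn1.det * Mn1.det * u i₀ := mul_nonneg (mul_self_nonneg _) hu0
  have h5 : lam * (D * Mn1.det) ≤ 0 := by linarith
  have hlam0 : lam = 0 := by
    by_contra hne
    have hlam' : 0 < lam := lt_of_le_of_ne hl0 (Ne.symm hne)
    nlinarith [mul_pos hlam' hprod]
  have hdet0 : Mn1.det ≠ 0 := by
    intro h; rw [h, mul_zero] at hprod; exact lt_irrefl 0 hprod
  have huz : u = 0 := by
    have : A.det • u = 0 := by rw [h2, hlam0]; simp
    funext i
    have := congrFun this i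
    simp only [Pi.smul_apply, smul_eq_mul, Pi.zero_apply, hdA] at this
    have := mul_eq_zero.mp this
    tauto
  funext i
  induction i using Fin.lastCases with
  | last => exact mul_self_eq_zero.mp hlam0
  | cast j =>
    have hz := congrFun huz j
    simp only [hu, Pi.zero_apply] at hz
    exact mul_self_eq_zero.mp hz
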